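/- With K_t and K^ε_t as above (ε ∈ {0,1}, K^ε_t := {α ∈ K_t : α(⟨Σ^t_{|t|},0⟩) = ε}): every nonempty relatively open subset of K^ε_t contains K_{t⌢n} for some n with w_n(0) = ε. -/

import Mathlib

/-- Triangular numbers. -/
def tri (m : ℕ) : ℕ := m * (m + 1) / 2

/-- The pairing `⟨n,p⟩ := (Σ_{k ≤ n+p} k) + p`. -/
def pairN (n p : ℕ) : ℕ := tri (n + p) + p

/-- `Σ^t_k := Σ_{j<k} (t(j) + 2)`. -/
def sigT (t : List ℕ) (k : ℕ) : ℕ := ((t.take k).map (· + 2)).sum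

/-- The set `K_t ⊆ 2^ω`: for each `k < |t|`, the vertical slices numbered
`Σ^t_k, …, Σ^t_k + t(k) + 1` are prescribed: the `i`-th of them is
`(w_{t(k)})_i · 0^∞`, except that the `0`-th one additionally carries a `1`
at position `t(k) + 1` (i.e. equals `(w_{t(k)})₀·0^{t(k)+1-|(w_{t(k)})₀|}·1·0^∞`). -/
def Kt (w : ℕ → List Bool) (t : List ℕ) : Set (ℕ → Bool) :=
  {α | ∀ k < t.length, ∀ i < t.getD k 0 + 2, ∀ p,
    α (pairN (sigT t k + i) p) =
      if i = 0 ∧ p = t.getD k 0 + 1 then true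
      else (w (t.getD k 0)).getD (pairN i p) false}

/-- The clopen piece `K^ε_t := {α ∈ K_t : α(⟨Σ^t_{|t|}, 0⟩) = ε}`. -/
def Keps (w : ℕ → List Bool) (t : List ℕ) (ε : Bool) : Set (ℕ → Bool) :=
  {α | α ∈ Kt w t ∧ α (pairN (sigT t t.length) 0) = ε}

/-- Unpairing function, inverse to `pairN`. -/
def unpairN : ℕ → ℕ × ℕ
  | 0 => (0, 0)
  | m + 1 =>
    match unpairN m with
    | (0, p) => (p + 1, 0)
    | (q + 1, p) => (q, p + 1)

lemma tri_succ (s : ℕ) : tri (s + 1) = tri s + (s + 1) := by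
  unfold tri
  have h : (s + 1) * (s + 1 + 1) = s * (s + 1) + (s + 1) * 2 := by ring
  rw [h, Nat.add_mul_div_right _ _ (by norm_num)]

lemma tri_le {a b : ℕ} (h : a ≤ b) : tri a ≤ tri b := by
  unfold tri
  exact Nat.div_le_div_right (Nat.mul_le_mul h (by omega))

lemma le_tri (a : ℕ) : a ≤ tri a := by
  induction a with
  | zero => simp [tri]
  | succ a ih => rw [tri_succ]; omega

lemma pairN_unpairN : ∀ m, pairN (unpairN m).1 (unpairN m).2 = m := by
  intro m
  induction m with
  | zero => simp [unpairN, pairN, tri]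
  | succ m ih =>
    rcases h : unpairN m with ⟨q, p⟩
    rw [h] at ih
    cases q with
    | zero =>
      have h2 : unpairN (m + 1) = (p + 1, 0) := by rw [unpairN, h]
      rw [h2]
      simp only [pairN] at ih ⊢
      rw [Nat.add_zero, Nat.zero_add] at *
      rw [tri_succ]; omega
    | succ q =>
      have h2 : unpairN (m + 1) = (q, p + 1) := by rw [unpairN, h]
      rw [h2]
      simp only [pairN] at ih ⊢
      have : q + (p + 1) = q + 1 + p := by omega
      rw [this]; omega

lemma pairN_inj {a b c d : ℕ} (h : pairN a b = pairN c d) : a = c ∧ b = d := by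
  unfold pairN at h
  rcases lt_trichotomy (a + b) (c + d) with hlt | heq | hgt
  · have h1 : tri (a + b) + (a + b + 1) ≤ tri (c + d) := by
      rw [← tri_succ]; exact tri_le hlt
    omega
  · rw [heq] at h; omega
  · have h1 : tri (c + d) + (c + d + 1) ≤ tri (a + b) := by
      rw [← tri_succ]; exact tri_le hgt
    omega

lemma unpairN_pairN (q p : ℕ) : unpairN (pairN q p) = (q, p) := by
  have h := pairN_unpairN (pairN q p)
  have h2 := pairN_inj h
  ext <;> simp [h2.1, h2.2]

lemma pairN_le_left {q q' : ℕ} (h : q ≤ q') (p : ℕ) : pairN q p ≤ pairN q' p := by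
  unfold pairN
  have := tri_le (Nat.add_le_add_right h p)
  omega

lemma left_le_pairN (q p : ℕ) : q ≤ pairN q p := by
  unfold pairN
  have h1 := le_tri (q + p)
  omega

lemma right_le_pairN (q p : ℕ) : p ≤ pairN q p := by
  unfold pairN; omega

lemma sigT_append (t s : List ℕ) {k : ℕ} (hk : k ≤ t.length) :
    sigT (t ++ s) k = sigT t k := by
  unfold sigT
  rw [List.take_append_of_le_length hk]

lemma sigT_succ_cons (a : ℕ) (t : List ℕ) (k : ℕ) :
    sigT (a :: t) (k + 1) = (a + 2) + sigT t k := by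
  simp [sigT]

lemma sigT_decomp (t : List ℕ) : ∀ q < sigT t t.length,
    ∃ k < t.length, ∃ i < t.getD k 0 + 2, q = sigT t k + i := by
  induction t with
  | nil => intro q hq; simp [sigT] at hq
  | cons a t ih =>
    intro q hq
    have hlen : (a :: t).length = t.length + 1 := rfl
    rw [hlen, sigT_succ_cons] at hq
    by_cases hqa : q < a + 2
    · exact ⟨0, by simp, q, by simpa using hqa, by simp [sigT]⟩
    · obtain ⟨k, hk, i, hi, hqi⟩ := ih (q - (a + 2)) (by omega)
      refine ⟨k + 1, by simp [hlen]; omega, i, by simpa using hi, ?_⟩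
      rw [sigT_succ_cons]
      omega

lemma getD_concat_length (t : List ℕ) (n : ℕ) : (t ++ [n]).getD t.length 0 = n := by
  rw [List.getD_eq_getElem _ _ (by simp)]
  simp

lemma prefix_getD {u v : List Bool} (h : u <+: v) {j : ℕ} (hj : j < u.length) :
    v.getD j false = u.getD j false := by
  obtain ⟨r, rfl⟩ := h
  exact List.getD_append _ _ _ _ hj

/-- every nonempty relatively open subset of `K^ε_t` contains some
`K_{t⌢n}` with `w_n(0) = ε`. -/
theorem stmt14 (w : ℕ → List Bool) (hw : ∀ n, (w n).length = n + 1)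
    (hdense : ∀ s : List Bool, ∃ n, s <+: w n) (t : List ℕ) (ε : Bool)
    (U : Set (ℕ → Bool)) (hU : IsOpen U) (hne : (U ∩ Keps w t ε).Nonempty) :
    ∃ n, (w n).getD 0 false = ε ∧ Kt w (t ++ [n]) ⊆ U ∩ Keps w t ε := by
  obtain ⟨α, hαU, hαKt, hαε⟩ := hne
  obtain ⟨I, O, hO, hsub⟩ := isOpen_pi_iff.mp hU α hαU
  set S := sigT t t.length with hS
  set N := I.sup id + 1 with hN
  set u : List Bool :=
    List.ofFn (fun j : Fin N => α (pairN (S + (unpairN j).1) (unpairN j).2)) with hu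
  obtain ⟨n, hpre⟩ := hdense u
  have hlenu : u.length = N := by rw [hu, List.length_ofFn]
  have hNn : N ≤ n + 1 := by
    have := hpre.length_le
    rw [hw, hlenu] at this
    exact this
  have hwval : ∀ j < N, (w n).getD j false
      = α (pairN (S + (unpairN j).1) (unpairN j).2) := by
    intro j hj
    rw [prefix_getD hpre (by omega), List.getD_eq_getElem _ _ (by omega)]
    simp only [hu, List.getElem_ofFn]
  have hmem : ∀ k < N, k = pairN (unpairN k).1 (unpairN k).2 := fun k _ =>
    (pairN_unpairN k).symm
  -- value at 0
  have hw0 : (w n).getD 0 false = ε := by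
    have h0 := hwval 0 (by omega)
    have hu0 : unpairN 0 = (0, 0) := rfl
    rw [hu0] at h0
    simpa using h0.trans hαε
  refine ⟨n, hw0, ?_⟩
  intro β hβ
  have hlen : (t ++ [n]).length = t.length + 1 := by simp
  -- β ∈ Kt w t
  have hβKt : β ∈ Kt w t := by
    intro k hk i hi p
    have h := hβ k (by omega) i (by rwa [List.getD_append _ _ _ _ hk]) p
    rwa [sigT_append _ _ (le_of_lt hk), List.getD_append _ _ _ _ hk] at h
  -- slice-(|t|) values of β
  have hβtop : ∀ i < n + 2, ∀ p, β (pairN (S + i) p)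
      = if i = 0 ∧ p = n + 1 then true else (w n).getD (pairN i p) false := by
    intro i hi p
    have h := hβ t.length (by omega) i
      (by rwa [getD_concat_length]) p
    rwa [sigT_append _ _ le_rfl, getD_concat_length] at h
  -- β ∈ Keps
  have hβε : β (pairN S 0) = ε := by
    have h := hβtop 0 (by omega) 0
    simp only [Nat.add_zero] at h
    rw [h, if_neg (by omega)]
    have : pairN 0 0 = 0 := rfl
    rw [this, hw0]
  -- β ∈ U
  have hβU : β ∈ U := by
    apply hsub
    intro m hm
    have hmN : m < N := by
      have : id m ≤ I.sup id := Finset.le_sup hm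
      simp only [id] at this; omega
    suffices hmα : β m = α m by rw [hmα]; exact (hO m hm).2
    obtain ⟨q, p, hqp⟩ : ∃ q p, m = pairN q p :=
      ⟨(unpairN m).1, (unpairN m).2, (pairN_unpairN m).symm⟩
    by_cases hqS : q < S
    · obtain ⟨k, hk, i, hi, rfl⟩ := sigT_decomp t q hqS
      rw [hqp, hβKt k hk i hi p, hαKt k hk i hi p]
    · -- q ≥ S
      have hiq : q - S < n + 2 := by
        by_contra hcon
        have h1 : q ≤ m := hqp ▸ left_le_pairN q p
        omega
      set i := q - S with hi
      have hq : q = S + i := by omega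
      have hnot : ¬ (i = 0 ∧ p = n + 1) := by
        rintro ⟨hi0, rfl⟩
        have := hqp ▸ right_le_pairN q (n + 1)
        omega
      have hb := hβtop i hiq p
      rw [if_neg hnot] at hb
      have hip : pairN i p < N :=
        lt_of_le_of_lt (hqp ▸ pairN_le_left (by omega) p) hmN
      have ha := hwval (pairN i p) hip
      rw [unpairN_pairN] at ha
      rw [hqp, hq, hb, ha]
  exact ⟨hβU, hβKt, hβε⟩
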